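/- (Proposition 3.) Fix s > 0 and α ∈ (0,1], and let (β_i)_{i≥1} be i.i.d. N(0, s²) random variables. Define g(α) := ∫₀^∞ max(α − F(u), 0) du, where F(u) := P[W² ≤ u] for a standard normal W (the chi-squared cdf with one degree of freedom). Then, almost surely, (1/(k·s²)) · min{ Σ_{i∈T} β_i² : T ⊆ {1,…,k}, |T| = ⌊α·k⌋ } → g(α) as k → ∞; that is, the normalized sum of the ⌊αk⌋ smallest values among β₁², …, β_k² converges almost surely to g(α). -/

import Mathlib

open MeasureTheory ProbabilityTheory Filter Set Topology

noncomputable def chiCdf : ℝ → ℝ := fun v => ((gaussianReal 0 1) {x : ℝ | x ^ 2 ≤ v}).toReal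

lemma sq_set_measurable (c : ℝ) : MeasurableSet {x : ℝ | x ^ 2 ≤ c} :=
  measurableSet_le (measurable_id.pow_const 2) measurable_const

lemma chiCdf_mono : Monotone chiCdf := by
  intro a b hab
  exact ENNReal.toReal_mono (measure_ne_top _ _)
    (measure_mono (fun x hx => le_trans hx hab))

lemma chiCdf_nonneg (v : ℝ) : 0 ≤ chiCdf v := ENNReal.toReal_nonneg

lemma chiCdf_le_one (v : ℝ) : chiCdf v ≤ 1 := by
  have h : (gaussianReal 0 1) {x : ℝ | x ^ 2 ≤ v} ≤ 1 := prob_le_one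
  have := ENNReal.toReal_mono ENNReal.one_ne_top h
  simpa [chiCdf] using this

lemma chiCdf_tendsto : Tendsto (fun n : ℕ => chiCdf (n : ℝ)) atTop (𝓝 1) := by
  have hsets : Monotone (fun n : ℕ => {x : ℝ | x ^ 2 ≤ (n : ℝ)}) := by
    intro a b hab x hx
    simp only [Set.mem_setOf_eq] at hx ⊢
    exact le_trans hx (by exact_mod_cast hab)
  have hmeas' := tendsto_measure_iUnion_atTop (μ := gaussianReal 0 1) hsets
  have huniv : ⋃ n : ℕ, {x : ℝ | x ^ 2 ≤ (n : ℝ)} = Set.univ := by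
    ext x
    simp only [Set.mem_iUnion, Set.mem_univ, iff_true, Set.mem_setOf_eq]
    exact exists_nat_ge (x ^ 2)
  rw [huniv, measure_univ] at hmeas'
  have := (ENNReal.tendsto_toReal ENNReal.one_ne_top).comp hmeas'
  exact this

lemma ind_eq (c : ℝ) : (fun v : ℝ => if v < c then (1:ℝ) else 0) = (Set.Iio c).indicator (fun _ => 1) := by
  ext v; simp [Set.indicator_apply]

lemma int_ind {c : ℝ} (hc : 0 ≤ c) :
    ∫ v in Set.Ioi (0:ℝ), (if v < c then (1:ℝ) else 0) = c := by
  rw [ind_eq, setIntegral_indicator measurableSet_Iio]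
  have h2 : Set.Ioi (0:ℝ) ∩ Set.Iio c = Set.Ioo 0 c := by
    ext x; simp [Set.mem_Ioo]
  rw [h2]
  simp [Real.volume_Ioo, ENNReal.toReal_ofReal hc, hc]

lemma int_ind_integrable (c : ℝ) :
    IntegrableOn (fun v : ℝ => if v < c then (1:ℝ) else 0) (Set.Ioi (0:ℝ)) := by
  rw [ind_eq]
  rw [IntegrableOn, integrable_indicator_iff measurableSet_Iio, IntegrableOn,
    Measure.restrict_restrict measurableSet_Iio]
  have h2 : Set.Iio c ∩ Set.Ioi (0:ℝ) = Set.Ioo 0 c := by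
    ext x; simp [Set.mem_Ioo, and_comm]
  rw [h2]
  exact integrableOn_const measure_Ioo_lt_top.ne

lemma minsum_eq_integral (k m : ℕ) (hm : m ≤ k) (y : ℕ → ℝ) (hy : ∀ i, 0 ≤ y i) :
    sInf {x : ℝ | ∃ T : Finset ℕ, T ⊆ Finset.range k ∧ T.card = m ∧ x = ∑ i ∈ T, y i}
      = ∫ v in Set.Ioi (0:ℝ),
          max ((m:ℝ) - ∑ i ∈ Finset.range k, (if y i ≤ v then (1:ℝ) else 0)) 0 := by
  set S := {x : ℝ | ∃ T : Finset ℕ, T ⊆ Finset.range k ∧ T.card = m ∧ x = ∑ i ∈ T, y i} with hSdef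
  have hSeq : S = ↑(((Finset.range k).powersetCard m).image (fun T => ∑ i ∈ T, y i)) := by
    ext x
    simp only [hSdef, Set.mem_setOf_eq, Finset.coe_image, Set.mem_image, Finset.mem_coe,
      Finset.mem_powersetCard]
    constructor
    · rintro ⟨T, h1, h2, h3⟩; exact ⟨T, ⟨h1, h2⟩, h3.symm⟩
    · rintro ⟨T, ⟨h1, h2⟩, h3⟩; exact ⟨T, h1, h2, h3.symm⟩
  have hSfin : S.Finite := by rw [hSeq]; exact Finset.finite_toSet _
  have hne : S.Nonempty := by
    obtain ⟨T, hT, hTc⟩ := Finset.exists_subset_card_eq (s := Finset.range k) (n := m) (by simpa using hm)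
    exact ⟨∑ i ∈ T, y i, T, hT, hTc, rfl⟩
  have hmem := hne.csInf_mem hSfin
  obtain ⟨T₀, hT₀sub, hT₀card, hT₀sum⟩ := hmem
  have hlb : ∀ x ∈ S, sInf S ≤ x := fun x hx => csInf_le hSfin.bddBelow hx
  -- swap optimality
  have hswap : ∀ i ∈ T₀, ∀ j ∈ Finset.range k, j ∉ T₀ → y i ≤ y j := by
    intro i hi j hj hjT
    by_contra hlt
    push_neg at hlt
    have hjer : j ∉ T₀.erase i := fun h => hjT (Finset.mem_of_mem_erase h)
    set T' := insert j (T₀.erase i) with hT'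
    have hsub' : T' ⊆ Finset.range k := by
      intro x hx
      rcases Finset.mem_insert.1 hx with rfl | hx
      · exact hj
      · exact hT₀sub (Finset.mem_of_mem_erase hx)
    have hcard' : T'.card = m := by
      have hm1 : 1 ≤ T₀.card := Finset.card_pos.2 ⟨i, hi⟩
      rw [hT', Finset.card_insert_of_notMem hjer, Finset.card_erase_of_mem hi]
      omega
    have hsum' : ∑ x ∈ T', y x = y j + (∑ x ∈ T₀, y x - y i) := by
      rw [hT', Finset.sum_insert hjer]
      congr 1
      have := Finset.sum_erase_add T₀ y hi
      linarith
    have hmemS : ∑ x ∈ T', y x ∈ S := ⟨T', hsub', hcard', rfl⟩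
    have := hlb _ hmemS
    rw [hsum'] at this
    rw [← hT₀sum] at this
    linarith
  -- pointwise identity
  have hpt : ∀ v : ℝ, (∑ i ∈ T₀, if v < y i then (1:ℝ) else 0)
      = max ((m:ℝ) - ∑ i ∈ Finset.range k, (if y i ≤ v then (1:ℝ) else 0)) 0 := by
    intro v
    have hA : (∑ i ∈ T₀, if v < y i then (1:ℝ) else 0)
        = (m : ℝ) - (T₀.filter (fun i => y i ≤ v)).card := by
      have : ∀ i, (if v < y i then (1:ℝ) else 0) = 1 - (if y i ≤ v then (1:ℝ) else 0) := by
        intro i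
        by_cases h : y i ≤ v
        · simp [h, not_lt.2 h]
        · simp [h, lt_of_not_ge h]
      simp_rw [this]
      rw [Finset.sum_sub_distrib, Finset.sum_const, Finset.sum_boole, hT₀card]
      simp
    have hB : (∑ i ∈ Finset.range k, if y i ≤ v then (1:ℝ) else 0)
        = ((Finset.range k).filter (fun i => y i ≤ v)).card := by
      rw [Finset.sum_boole]
    set A := T₀.filter (fun i => y i ≤ v)
    set B := (Finset.range k).filter (fun i => y i ≤ v)
    have hcardA : A.card = min B.card m := by
      by_cases hex : ∃ j ∈ Finset.range k, j ∉ T₀ ∧ y j ≤ v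
      · obtain ⟨j, hj, hjT, hjv⟩ := hex
        have hAeq : A = T₀ := by
          apply Finset.filter_true_of_mem
          intro i hi
          exact le_trans (hswap i hi j hj hjT) hjv
        have hTB : insert j T₀ ⊆ B := by
          intro x hx
          rcases Finset.mem_insert.1 hx with rfl | hx
          · exact Finset.mem_filter.2 ⟨hj, hjv⟩
          · exact Finset.mem_filter.2 ⟨hT₀sub hx, le_trans (hswap x hx j hj hjT) hjv⟩
        have : m + 1 ≤ B.card := by
          have := Finset.card_le_card hTB
          rwa [Finset.card_insert_of_notMem hjT, hT₀card] at this
        rw [hAeq, hT₀card]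
        omega
      · push_neg at hex
        have hBT : B ⊆ T₀ := by
          intro x hx
          obtain ⟨hx1, hx2⟩ := Finset.mem_filter.1 hx
          by_contra hxT
          exact absurd hx2 (not_le.2 (hex x hx1 hxT))
        have hAB : A = B := by
          apply Finset.Subset.antisymm
          · intro x hx
            obtain ⟨hx1, hx2⟩ := Finset.mem_filter.1 hx
            exact Finset.mem_filter.2 ⟨hT₀sub hx1, hx2⟩
          · intro x hx
            exact Finset.mem_filter.2 ⟨hBT hx, (Finset.mem_filter.1 hx).2⟩
        have hBm : B.card ≤ m := by rw [← hT₀card]; exact Finset.card_le_card hBT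
        rw [hAB]
        omega
    rw [hA, hB, hcardA]
    rcases le_total (B.card) m with h | h
    · rw [min_eq_left h, max_eq_left (by have := (Nat.cast_le (α := ℝ)).2 h; linarith)]
    · rw [min_eq_right h, max_eq_right (by have := (Nat.cast_le (α := ℝ)).2 h; linarith)]
      simp
  -- integrate
  have hfun : (fun v : ℝ => max ((m:ℝ) - ∑ i ∈ Finset.range k, (if y i ≤ v then (1:ℝ) else 0)) 0)
      = fun v => ∑ i ∈ T₀, if v < y i then (1:ℝ) else 0 := by
    funext v; rw [hpt v]
  rw [hfun, integral_finset_sum _ (fun i _ => int_ind_integrable (y i))]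
  rw [hT₀sum]
  exact Finset.sum_congr rfl (fun i _ => (int_ind (hy i)).symm)

lemma slln_comp {Ω : Type*} [MeasurableSpace Ω] (μ : Measure Ω) [IsProbabilityMeasure μ]
    (β : ℕ → Ω → ℝ) (hmeas : ∀ i, Measurable (β i))
    (hindep : iIndepFun β μ)
    (ν : Measure ℝ) [IsProbabilityMeasure ν]
    (hdist : ∀ i, Measure.map (β i) μ = ν)
    (f : ℝ → ℝ) (hf : Measurable f) (hfint : Integrable f ν) :
    ∀ᵐ ω ∂μ, Tendsto (fun k : ℕ => (∑ i ∈ Finset.range k, f (β i ω)) / k) atTop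
      (𝓝 (∫ x, f x ∂ν)) := by
  have hX : ∀ i, Measure.map (f ∘ β i) μ = Measure.map f ν := by
    intro i
    rw [← Measure.map_map hf (hmeas i), hdist i]
  have hint : Integrable (f ∘ β 0) μ := by
    have h0 : Integrable f (Measure.map (β 0) μ) := by rw [hdist 0]; exact hfint
    exact (integrable_map_measure (by rw [hdist 0]; exact hfint.aestronglyMeasurable)
      (hmeas 0).aemeasurable).1 h0
  have hident : ∀ i, IdentDistrib (f ∘ β i) (f ∘ β 0) μ μ :=
    fun i => ⟨(hf.comp (hmeas i)).aemeasurable, (hf.comp (hmeas 0)).aemeasurable,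
      by rw [hX i, hX 0]⟩
  have hpair : Pairwise (Function.onFun (IndepFun · · μ) (fun i => f ∘ β i)) :=
    fun i j hij => (hindep.indepFun hij).comp hf hf
  have h := strong_law_ae_real (fun i => f ∘ β i) hint hpair hident
  have hE : μ[f ∘ β 0] = ∫ x, f x ∂ν := by
    rw [← hdist 0, integral_map (hmeas 0).aemeasurable hf.aestronglyMeasurable]
    rfl
  rw [hE] at h
  exact h

lemma gauss_sq_integrable : Integrable (fun x : ℝ => x ^ 2) (gaussianReal 0 1) := by
  rw [gaussianReal_of_var_ne_zero 0 one_ne_zero]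
  rw [integrable_withDensity_iff (measurable_gaussianPDF 0 1)
    (Eventually.of_forall fun x => ENNReal.ofReal_lt_top)]
  have h : ∀ x : ℝ, ((gaussianPDF 0 1 x).toReal : ℝ) = gaussianPDFReal 0 1 x := by
    intro x
    rw [gaussianPDF, ENNReal.toReal_ofReal (gaussianPDFReal_nonneg 0 1 x)]
  simp_rw [h, gaussianPDFReal]
  have hbase : Integrable (fun x : ℝ => x ^ (2:ℝ) * Real.exp (-(1/2) * x ^ 2)) volume :=
    integrable_rpow_mul_exp_neg_mul_sq (b := 1/2) (s := 2) (by norm_num) (by norm_num)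
  have heq : (fun x : ℝ => x ^ 2 * ((Real.sqrt (2 * Real.pi * (1:NNReal)))⁻¹
        * Real.exp (-(x - 0) ^ 2 / (2 * (1:NNReal)))))
      = fun x : ℝ => (Real.sqrt (2 * Real.pi * (1:NNReal)))⁻¹
        * (x ^ (2:ℝ) * Real.exp (-(1/2) * x ^ 2)) := by
    funext x
    have h2 : x ^ (2:ℝ) = x ^ 2 := by
      rw [show (2:ℝ) = ((2:ℕ):ℝ) by norm_num, Real.rpow_natCast]
    have h3 : -(x - 0) ^ 2 / (2 * ((1:NNReal):ℝ)) = -(1/2) * x ^ 2 := by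
      push_cast; ring
    rw [h2, h3]; ring
  rw [heq]
  exact hbase.const_mul _

lemma gauss_scale_eq (s : ℝ) :
    gaussianReal 0 (Real.toNNReal (s ^ 2))
      = Measure.map (fun x => s * x) (gaussianReal 0 1) := by
  have h := gaussianReal_map_const_mul (μ := 0) (v := 1) s
  rw [mul_zero] at h
  rw [h]
  congr 1
  ext
  simp [Real.coe_toNNReal _ (sq_nonneg s)]

lemma gauss_scale_set (s : ℝ) (hs : 0 < s) (v : ℝ) :
    gaussianReal 0 (Real.toNNReal (s ^ 2)) {x | x ^ 2 ≤ s ^ 2 * v}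
      = gaussianReal 0 1 {x | x ^ 2 ≤ v} := by
  rw [gauss_scale_eq s, Measure.map_apply (measurable_const_mul s) (sq_set_measurable _)]
  congr 1
  ext x
  simp only [Set.mem_preimage, Set.mem_setOf_eq, mul_pow]
  exact mul_le_mul_iff_right₀ (pow_pos hs 2)

lemma gauss_sq_integrable_scaled (s : ℝ) :
    Integrable (fun x : ℝ => x ^ 2) (gaussianReal 0 (Real.toNNReal (s ^ 2))) := by
  rw [gauss_scale_eq s]
  rw [integrable_map_measure (by fun_prop) (measurable_const_mul s).aemeasurable]
  have : ((fun x : ℝ => x ^ 2) ∘ fun x => s * x) = fun x : ℝ => s ^ 2 * x ^ 2 := by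
    funext x; simp [mul_pow]
  rw [this]
  exact gauss_sq_integrable.const_mul _

lemma gauss_sq_int_scaled (s : ℝ) :
    ∫ x, x ^ 2 ∂(gaussianReal 0 (Real.toNNReal (s ^ 2)))
      = s ^ 2 * ∫ x, x ^ 2 ∂(gaussianReal 0 1) := by
  rw [gauss_scale_eq s, integral_map (measurable_const_mul s).aemeasurable (by fun_prop)]
  simp_rw [mul_pow]
  exact integral_const_mul _ _

lemma mono_conv {G : ℕ → ℝ → ℝ} {F : ℝ → ℝ} (hGmono : ∀ k, Monotone (G k)) (hF : Monotone F)
    (hconv : ∀ q : ℚ, Tendsto (fun k => G k (q : ℝ)) atTop (𝓝 (F q))) {v : ℝ}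
    (hcont : ContinuousAt F v) :
    Tendsto (fun k => G k v) atTop (𝓝 (F v)) := by
  rw [Metric.tendsto_atTop]
  intro ε hε
  obtain ⟨δ, hδ, hδε⟩ := Metric.continuousAt_iff.1 hcont (ε/2) (by linarith)
  obtain ⟨p, hp1, hp2⟩ := exists_rat_btwn (show v - δ < v by linarith)
  obtain ⟨q, hq1, hq2⟩ := exists_rat_btwn (show v < v + δ by linarith)
  have hFp : |F p - F v| < ε/2 := by
    have : dist (p : ℝ) v < δ := by rw [Real.dist_eq, abs_lt]; constructor <;> linarith
    have := hδε this
    rwa [Real.dist_eq] at this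
  have hFq : |F q - F v| < ε/2 := by
    have : dist (q : ℝ) v < δ := by rw [Real.dist_eq, abs_lt]; constructor <;> linarith
    have := hδε this
    rwa [Real.dist_eq] at this
  have h1 := (Metric.tendsto_atTop.1 (hconv p)) (ε/2) (by linarith)
  have h2 := (Metric.tendsto_atTop.1 (hconv q)) (ε/2) (by linarith)
  obtain ⟨N1, hN1⟩ := h1
  obtain ⟨N2, hN2⟩ := h2
  refine ⟨max N1 N2, fun k hk => ?_⟩
  have hk1 := hN1 k (le_trans (le_max_left _ _) hk)
  have hk2 := hN2 k (le_trans (le_max_right _ _) hk)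
  rw [Real.dist_eq, abs_lt] at hk1 hk2 ⊢
  rw [abs_lt] at hFp hFq
  have hgp : G k p ≤ G k v := hGmono k (le_of_lt hp2)
  have hgq : G k v ≤ G k q := hGmono k (le_of_lt hq1)
  constructor <;> [nlinarith; nlinarith]

lemma restrict_int {f : ℝ → ℝ} {Q : ℝ} (hQ : 0 < Q) (hf : ∀ v : ℝ, Q ≤ v → f v = 0) :
    ∫ v in Set.Ioi (0:ℝ), f v = ∫ v in Set.Ioc (0:ℝ) Q, f v := by
  have heq : Set.EqOn f ((Set.Ioc (0:ℝ) Q).indicator f) (Set.Ioi 0) := by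
    intro v hv
    by_cases hvQ : v ≤ Q
    · have hmem : v ∈ Set.Ioc (0:ℝ) Q := ⟨hv, hvQ⟩
      rw [Set.indicator_of_mem hmem]
    · rw [Set.indicator_of_notMem (fun hmem => hvQ hmem.2), hf v (le_of_not_ge hvQ)]
  rw [setIntegral_congr_fun measurableSet_Ioi heq, setIntegral_indicator measurableSet_Ioc,
    Set.inter_eq_self_of_subset_right (fun x hx => hx.1)]

lemma int_ite_sq (γ : Measure ℝ) (c : ℝ) :
    ∫ x, (if x ^ 2 ≤ c then (1:ℝ) else 0) ∂γ = (γ {x : ℝ | x ^ 2 ≤ c}).toReal := by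
  have h : (fun x : ℝ => if x ^ 2 ≤ c then (1:ℝ) else 0)
      = Set.indicator {x : ℝ | x ^ 2 ≤ c} (fun _ => 1) := by
    ext x; simp [Set.indicator_apply, Set.mem_setOf_eq]
  rw [h, integral_indicator_const (1:ℝ) (sq_set_measurable c)]
  simp
  rfl

lemma chiCdf_layercake :
    ∫ u in Set.Ioi (0:ℝ), max (1 - chiCdf u) 0 = ∫ x, x ^ 2 ∂(gaussianReal 0 1) := by
  have h1 : ∫ x, x ^ 2 ∂(gaussianReal 0 1)
      = ∫ t in Set.Ioi (0:ℝ), ((gaussianReal 0 1) {a : ℝ | t < a ^ 2}).toReal :=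
    gauss_sq_integrable.integral_eq_integral_meas_lt (ae_of_all _ fun x => sq_nonneg x)
  rw [h1]
  apply setIntegral_congr_fun measurableSet_Ioi
  intro v _
  have hcompl : {a : ℝ | v < a ^ 2} = {x : ℝ | x ^ 2 ≤ v}ᶜ := by
    ext x; simp [not_le]
  have hc : (gaussianReal 0 1) {a : ℝ | v < a ^ 2} = 1 - (gaussianReal 0 1) {x : ℝ | x ^ 2 ≤ v} := by
    rw [hcompl, measure_compl (sq_set_measurable v) (measure_ne_top _ _), measure_univ]
  simp only [hc]
  rw [ENNReal.toReal_sub_of_le prob_le_one ENNReal.one_ne_top]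
  rw [max_eq_left (by linarith [chiCdf_le_one v])]
  simp [chiCdf]

noncomputable def emp (y : ℕ → ℝ) (c : ℝ) (k : ℕ) (v : ℝ) : ℝ :=
  (∑ i ∈ Finset.range k, if y i ≤ c * v then (1:ℝ) else 0) / k

lemma emp_nonneg (y : ℕ → ℝ) (c : ℝ) (k : ℕ) (v : ℝ) : 0 ≤ emp y c k v := by
  apply div_nonneg _ (Nat.cast_nonneg k)
  apply Finset.sum_nonneg
  intro i _
  split <;> norm_num

lemma emp_le_one (y : ℕ → ℝ) (c : ℝ) (k : ℕ) (v : ℝ) : emp y c k v ≤ 1 := by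
  rcases Nat.eq_zero_or_pos k with rfl | hk
  · simp [emp]
  · rw [emp, div_le_one (by exact_mod_cast hk)]
    calc (∑ i ∈ Finset.range k, if y i ≤ c * v then (1:ℝ) else 0)
        ≤ ∑ i ∈ Finset.range k, 1 := by
          apply Finset.sum_le_sum; intro i _; split <;> norm_num
      _ = k := by simp

lemma emp_mono (y : ℕ → ℝ) {c : ℝ} (hc : 0 ≤ c) (k : ℕ) : Monotone (emp y c k) := by
  intro a b hab
  rw [emp, emp, div_eq_mul_inv, div_eq_mul_inv]
  apply mul_le_mul_of_nonneg_right _ (by positivity)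
  apply Finset.sum_le_sum
  intro i _
  by_cases h : y i ≤ c * a
  · rw [if_pos h, if_pos (h.trans (by nlinarith))]
  · rw [if_neg h]
    split <;> norm_num

theorem smallest_squares_glivenko_cantelli
    {Ω : Type*} [MeasurableSpace Ω] (μ : Measure Ω) [IsProbabilityMeasure μ]
    (s α : ℝ) (hs : 0 < s) (hα0 : 0 < α) (hα1 : α ≤ 1)
    (β : ℕ → Ω → ℝ) (hmeas : ∀ i, Measurable (β i))
    (hindep : iIndepFun β μ)
    (hdist : ∀ i, Measure.map (β i) μ = gaussianReal 0 (Real.toNNReal (s ^ 2))) :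
    ∀ᵐ ω ∂μ, Tendsto
      (fun k : ℕ => (1 / ((k : ℝ) * s ^ 2)) *
        sInf {x : ℝ | ∃ T : Finset ℕ, T ⊆ Finset.range k ∧ T.card = ⌊α * (k : ℝ)⌋₊ ∧
          x = ∑ i ∈ T, (β i ω) ^ 2})
      atTop
      (nhds (∫ u in Set.Ioi (0 : ℝ),
        max (α - ((gaussianReal 0 1) {x : ℝ | x ^ 2 ≤ u}).toReal) 0)) := by
  classical
  have hs2 : (0:ℝ) < s ^ 2 := pow_pos hs 2
  have hs2' : s ^ 2 ≠ 0 := ne_of_gt hs2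
  -- a.s. convergence of the empirical cdf at every rational point
  have hind : ∀ q : ℚ, ∀ᵐ ω ∂μ, Tendsto
      (fun k : ℕ => emp (fun i => (β i ω) ^ 2) (s ^ 2) k (q : ℝ)) atTop
      (𝓝 (chiCdf (q : ℝ))) := by
    intro q
    have hfm : Measurable (fun x : ℝ => if x ^ 2 ≤ s ^ 2 * (q:ℝ) then (1:ℝ) else 0) :=
      Measurable.ite (sq_set_measurable _) measurable_const measurable_const
    have hfint : Integrable (fun x : ℝ => if x ^ 2 ≤ s ^ 2 * (q:ℝ) then (1:ℝ) else 0)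
        (gaussianReal 0 (Real.toNNReal (s ^ 2))) := by
      apply (integrable_const (1:ℝ)).mono' hfm.aestronglyMeasurable
      apply ae_of_all
      intro x
      split <;> simp
    have h := slln_comp μ β hmeas hindep _ hdist _ hfm hfint
    have hI : ∫ x, (if x ^ 2 ≤ s ^ 2 * (q:ℝ) then (1:ℝ) else 0)
        ∂(gaussianReal 0 (Real.toNNReal (s ^ 2))) = chiCdf (q : ℝ) := by
      rw [int_ite_sq, gauss_scale_set s hs (q:ℝ)]
      rfl
    rw [hI] at h
    simpa [emp] using h
  have hae := ae_all_iff.2 hind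
  rcases eq_or_lt_of_le hα1 with hα1' | hα1'
  · -- case α = 1
    subst hα1'
    have hsq := slln_comp μ β hmeas hindep _ hdist (fun x => x ^ 2)
      (measurable_id.pow_const 2) (gauss_sq_integrable_scaled s)
    filter_upwards [hsq] with ω hω
    have hset : ∀ k : ℕ, {x : ℝ | ∃ T : Finset ℕ, T ⊆ Finset.range k ∧
        T.card = ⌊(1:ℝ) * (k:ℝ)⌋₊ ∧ x = ∑ i ∈ T, (β i ω) ^ 2}
        = {∑ i ∈ Finset.range k, (β i ω) ^ 2} := by
      intro k
      have hfloor : ⌊(1:ℝ) * (k:ℝ)⌋₊ = k := by rw [one_mul, Nat.floor_natCast]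
      ext x
      simp only [hfloor, Set.mem_setOf_eq, Set.mem_singleton_iff]
      constructor
      · rintro ⟨T, h1, h2, rfl⟩
        rw [Finset.eq_of_subset_of_card_le h1 (by rw [h2, Finset.card_range])]
      · rintro rfl
        exact ⟨Finset.range k, le_refl _, by rw [Finset.card_range], rfl⟩
    rw [gauss_sq_int_scaled s] at hω
    have h2 : Tendsto (fun k : ℕ => (1/s^2) * ((∑ i ∈ Finset.range k, (β i ω) ^ 2)/k))
        atTop (𝓝 ((1/s^2) * (s ^ 2 * ∫ x, x ^ 2 ∂(gaussianReal 0 1)))) := hω.const_mul _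
    have hval : (1/s^2) * (s ^ 2 * ∫ x, x ^ 2 ∂(gaussianReal 0 1))
        = ∫ x, x ^ 2 ∂(gaussianReal 0 1) := by
      field_simp
    rw [hval] at h2
    have hgoal : (∫ u in Set.Ioi (0:ℝ),
        max ((1:ℝ) - ((gaussianReal 0 1) {x : ℝ | x ^ 2 ≤ u}).toReal) 0)
        = ∫ x, x ^ 2 ∂(gaussianReal 0 1) := chiCdf_layercake
    rw [hgoal]
    apply Tendsto.congr' _ h2
    apply Eventually.of_forall
    intro k
    dsimp only
    rw [hset k, csInf_singleton]
    ring
  · -- case α < 1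
    filter_upwards [hae] with ω hω
    set y : ℕ → ℝ := fun i => (β i ω) ^ 2 with hydef
    have hGq : ∀ q : ℚ, Tendsto (fun k => emp y (s ^ 2) k (q : ℝ)) atTop (𝓝 (chiCdf (q:ℝ))) := hω
    have hGmono : ∀ k, Monotone (emp y (s ^ 2) k) := fun k => emp_mono y (le_of_lt hs2) k
    -- the normalized floor sequence
    have hmk : ∀ k : ℕ, ⌊α * (k:ℝ)⌋₊ ≤ k := by
      intro k
      calc ⌊α * (k:ℝ)⌋₊ ≤ ⌊(k:ℝ)⌋₊ :=
            Nat.floor_mono (by nlinarith [Nat.cast_nonneg (α := ℝ) k])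
        _ = k := Nat.floor_natCast k
    have hA1 : ∀ k : ℕ, (⌊α * (k:ℝ)⌋₊ : ℝ)/k ≤ 1 := by
      intro k
      rcases Nat.eq_zero_or_pos k with rfl | hk
      · simp
      · rw [div_le_one (by exact_mod_cast hk)]
        exact_mod_cast hmk k
    have hAα : ∀ k : ℕ, 1 ≤ k → (⌊α * (k:ℝ)⌋₊ : ℝ)/k ≤ α := by
      intro k hk
      have hkpos : (0:ℝ) < k := by exact_mod_cast hk
      rw [div_le_iff₀ hkpos]
      exact Nat.floor_le (by positivity)
    have hAtend : Tendsto (fun k : ℕ => (⌊α * (k:ℝ)⌋₊ : ℝ)/k) atTop (𝓝 α) := by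
      have hlow : Tendsto (fun k : ℕ => α - 1/(k:ℝ)) atTop (𝓝 α) := by
        have h0 : Tendsto (fun k : ℕ => α - 1/(k:ℝ)) atTop (𝓝 (α - 0)) :=
          Tendsto.sub tendsto_const_nhds tendsto_one_div_atTop_nhds_zero_nat
        simpa using h0
      refine tendsto_of_tendsto_of_tendsto_of_le_of_le' hlow tendsto_const_nhds ?_ ?_
      · filter_upwards [eventually_ge_atTop 1] with k hk
        have hkpos : (0:ℝ) < k := by exact_mod_cast hk
        rw [le_div_iff₀ hkpos]
        have h1 := Nat.sub_one_lt_floor (α * (k:ℝ))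
        have h2 : (1/(k:ℝ))*k = 1 := by field_simp
        nlinarith
      · filter_upwards [eventually_ge_atTop 1] with k hk
        exact hAα k hk
    -- choose a rational point where the limit cdf exceeds α
    obtain ⟨n₀, hn₀⟩ := (chiCdf_tendsto.eventually (eventually_gt_nhds hα1')).exists
    set Q : ℚ := max (n₀ : ℚ) 1 with hQdef
    have hQ1 : (1:ℝ) ≤ (Q:ℝ) := by rw [hQdef]; push_cast; exact le_max_right _ _
    have hQpos : (0:ℝ) < (Q:ℝ) := lt_of_lt_of_le one_pos hQ1
    have hQα : α < chiCdf (Q:ℝ) := by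
      refine lt_of_lt_of_le hn₀ (chiCdf_mono ?_)
      rw [hQdef]; push_cast; exact le_max_left _ _
    -- identity for k ≥ 1
    have hid : ∀ k : ℕ, 1 ≤ k →
        (1 / ((k:ℝ) * s ^ 2)) * sInf {x : ℝ | ∃ T : Finset ℕ, T ⊆ Finset.range k ∧
          T.card = ⌊α * (k:ℝ)⌋₊ ∧ x = ∑ i ∈ T, (β i ω) ^ 2}
        = ∫ v in Set.Ioi (0:ℝ), max ((⌊α * (k:ℝ)⌋₊ : ℝ)/k - emp y (s ^ 2) k v) 0 := by
      intro k hk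
      have hkpos : (0:ℝ) < k := by exact_mod_cast hk
      rw [minsum_eq_integral k ⌊α * (k:ℝ)⌋₊ (hmk k) _ (fun i => sq_nonneg _)]
      have hsub := integral_comp_mul_left_Ioi
        (fun u => max (((⌊α * (k:ℝ)⌋₊ : ℕ):ℝ)
          - ∑ i ∈ Finset.range k, (if (β i ω) ^ 2 ≤ u then (1:ℝ) else 0)) 0) 0 hs2
      rw [mul_zero, smul_eq_mul] at hsub
      have h2 : ∀ v : ℝ, max ((⌊α * (k:ℝ)⌋₊ : ℝ)/k - emp y (s ^ 2) k v) 0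
          = (1/(k:ℝ)) * max (((⌊α * (k:ℝ)⌋₊ : ℕ):ℝ)
              - ∑ i ∈ Finset.range k, (if (β i ω) ^ 2 ≤ s ^ 2 * v then (1:ℝ) else 0)) 0 := by
        intro v
        rw [one_div, inv_mul_eq_div, ← max_div_div_right (le_of_lt hkpos), sub_div, zero_div]
        rfl
      calc (1 / ((k:ℝ) * s ^ 2)) * ∫ u in Set.Ioi (0:ℝ),
              max (((⌊α * (k:ℝ)⌋₊ : ℕ):ℝ)
                - ∑ i ∈ Finset.range k, (if (β i ω) ^ 2 ≤ u then (1:ℝ) else 0)) 0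
          = (1/(k:ℝ)) * ((s ^ 2)⁻¹ * ∫ u in Set.Ioi (0:ℝ),
              max (((⌊α * (k:ℝ)⌋₊ : ℕ):ℝ)
                - ∑ i ∈ Finset.range k, (if (β i ω) ^ 2 ≤ u then (1:ℝ) else 0)) 0) * s ^ 2
            / s ^ 2 := by
            field_simp
        _ = (1/(k:ℝ)) * ∫ v in Set.Ioi (0:ℝ),
              max (((⌊α * (k:ℝ)⌋₊ : ℕ):ℝ)
                - ∑ i ∈ Finset.range k, (if (β i ω) ^ 2 ≤ s ^ 2 * v then (1:ℝ) else 0)) 0 := by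
            rw [← hsub]
            field_simp
        _ = ∫ v in Set.Ioi (0:ℝ),
              (1/(k:ℝ)) * max (((⌊α * (k:ℝ)⌋₊ : ℕ):ℝ)
                - ∑ i ∈ Finset.range k, (if (β i ω) ^ 2 ≤ s ^ 2 * v then (1:ℝ) else 0)) 0 :=
            (integral_const_mul _ _).symm
        _ = ∫ v in Set.Ioi (0:ℝ), max ((⌊α * (k:ℝ)⌋₊ : ℝ)/k - emp y (s ^ 2) k v) 0 := by
            apply setIntegral_congr_fun measurableSet_Ioi
            intro v _
            dsimp only
            rw [h2 v]
    -- eventual vanishing beyond Q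
    have hvan : ∀ᶠ k in atTop, 1 ≤ k ∧ α < emp y (s ^ 2) k (Q:ℝ) :=
      (eventually_ge_atTop 1).and ((hGq Q).eventually (eventually_gt_nhds hQα))
    -- dominated convergence on (0, Q]
    have hconv : Tendsto (fun k : ℕ => ∫ v in Set.Ioc (0:ℝ) (Q:ℝ),
        max ((⌊α * (k:ℝ)⌋₊ : ℝ)/k - emp y (s ^ 2) k v) 0) atTop
        (𝓝 (∫ v in Set.Ioc (0:ℝ) (Q:ℝ), max (α - chiCdf v) 0)) := by
      apply tendsto_integral_of_dominated_convergence (bound := fun _ => (1:ℝ))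
      · intro k
        exact ((measurable_const.sub (hGmono k).measurable).max measurable_const).aestronglyMeasurable
      · exact integrableOn_const measure_Ioc_lt_top.ne
      · intro k
        apply ae_of_all
        intro v
        rw [Real.norm_eq_abs, abs_of_nonneg (le_max_right _ _)]
        apply max_le _ zero_le_one
        have := emp_nonneg y (s ^ 2) k v
        have h1 := hA1 k
        linarith
      · have hD := (chiCdf_mono.countable_not_continuousAt).measure_zero (volume : Measure ℝ)
        have hcont : ∀ᵐ v ∂(volume : Measure ℝ), ContinuousAt chiCdf v := by
          rw [ae_iff]
          exact hD
        have h' := ae_restrict_of_ae (s := Set.Ioc (0:ℝ) (Q:ℝ)) hcont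
        filter_upwards [h'] with v hv
        exact (hAtend.sub (mono_conv hGmono chiCdf_mono hGq hv)).max tendsto_const_nhds
    -- rewrite the target integral
    have hΨQ : ∀ v : ℝ, (Q:ℝ) ≤ v → max (α - chiCdf v) 0 = 0 := by
      intro v hv
      apply max_eq_right
      have := chiCdf_mono hv
      linarith
    have hgoal : (∫ u in Set.Ioi (0:ℝ),
        max (α - ((gaussianReal 0 1) {x : ℝ | x ^ 2 ≤ u}).toReal) 0)
        = ∫ v in Set.Ioc (0:ℝ) (Q:ℝ), max (α - chiCdf v) 0 :=
      restrict_int hQpos hΨQ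
    rw [hgoal]
    apply Tendsto.congr' _ hconv
    filter_upwards [hvan] with k hk
    obtain ⟨hk1, hkQ⟩ := hk
    have hvank : ∀ v : ℝ, (Q:ℝ) ≤ v → max ((⌊α * (k:ℝ)⌋₊ : ℝ)/k - emp y (s ^ 2) k v) 0 = 0 := by
      intro v hv
      apply max_eq_right
      have h1 := hAα k hk1
      have h2 := (hGmono k) hv
      linarith
    rw [← restrict_int hQpos hvank, ← hid k hk1]
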